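/- L¹_r(ℓ²(H)) is a right ideal for the Schur product in M_r(ℓ²(H)): if A ∈ L¹_r(ℓ²(H)) and B ∈ M_r(ℓ²(H)), then B*A ∈ L¹_r(ℓ²(H)). -/

import Mathlib

set_option linter.unusedSectionVars false


open Finset Filter

noncomputable section

variable {H : Type*} [NormedAddCommGroup H] [InnerProductSpace ℂ H]
  [CompleteSpace H] [TopologicalSpace.SeparableSpace H]

/-- `A` defines a bounded operator on `ℓ²(H)` with norm at most `C`, expressed through
uniform bounds of the associated bilinear form on finitely supported sequences. -/
def SchurBoundedBy (A : ℕ → ℕ → (H →L[ℂ] H)) (C : ℝ) : Prop :=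
  ∀ (F G : Finset ℕ) (x y : ℕ → H),
    ‖∑ k ∈ G, ∑ j ∈ F, (inner ℂ (A k j (x j)) (y k) : ℂ)‖ ≤
      C * Real.sqrt (∑ j ∈ F, ‖x j‖ ^ 2) * Real.sqrt (∑ k ∈ G, ‖y k‖ ^ 2)

/-- `A ∈ B(ℓ²(H))`. -/
def MemB (A : ℕ → ℕ → (H →L[ℂ] H)) : Prop :=
  ∃ C, 0 ≤ C ∧ SchurBoundedBy A C

/-- The Schur product of two operator matrices: entrywise composition. -/
def schur (A B : ℕ → ℕ → (H →L[ℂ] H)) : ℕ → ℕ → (H →L[ℂ] H) :=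
  fun k j => (A k j).comp (B k j)

/-- `A` is a right Schur multiplier with multiplier norm at most `C`. -/
def MrBoundedBy (A : ℕ → ℕ → (H →L[ℂ] H)) (C : ℝ) : Prop :=
  ∀ (B : ℕ → ℕ → (H →L[ℂ] H)) (D : ℝ), 0 ≤ D → SchurBoundedBy B D →
    SchurBoundedBy (schur B A) (C * D)

/-- `A` is a left Schur multiplier with multiplier norm at most `C`. -/
def MlBoundedBy (A : ℕ → ℕ → (H →L[ℂ] H)) (C : ℝ) : Prop :=
  ∀ (B : ℕ → ℕ → (H →L[ℂ] H)) (D : ℝ), 0 ≤ D → SchurBoundedBy B D →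
    SchurBoundedBy (schur A B) (C * D)

/-- `A ∈ M_r(ℓ²(H))`. -/
def MemMr (A : ℕ → ℕ → (H →L[ℂ] H)) : Prop :=
  ∃ C, 0 ≤ C ∧ MrBoundedBy A C

/-- `A ∈ M_l(ℓ²(H))`. -/
def MemMl (A : ℕ → ℕ → (H →L[ℂ] H)) : Prop :=
  ∃ C, 0 ≤ C ∧ MlBoundedBy A C

/-- A matrix polynomial: supported on finitely many diagonals, with uniformly
bounded operator entries. -/
def IsMatPoly (A : ℕ → ℕ → (H →L[ℂ] H)) : Prop :=
  (∃ N : ℕ, ∀ k j : ℕ, N < ((j : ℤ) - (k : ℤ)).natAbs → A k j = 0) ∧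
    ∃ M : ℝ, ∀ k j : ℕ, ‖A k j‖ ≤ M

/-- `A ∈ L¹_r(ℓ²(H))`: `A` is a right Schur multiplier lying in the closure of the
matrix polynomials in the right multiplier norm. -/
def MemL1r (A : ℕ → ℕ → (H →L[ℂ] H)) : Prop :=
  MemMr A ∧ ∀ ε : ℝ, 0 < ε → ∃ P : ℕ → ℕ → (H →L[ℂ] H),
    IsMatPoly P ∧ MrBoundedBy (fun k j => A k j - P k j) ε

/-- `A ∈ L¹_l(ℓ²(H))`: `A` is a left Schur multiplier lying in the closure of the
matrix polynomials in the left multiplier norm. -/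
def MemL1l (A : ℕ → ℕ → (H →L[ℂ] H)) : Prop :=
  MemMl A ∧ ∀ ε : ℝ, 0 < ε → ∃ P : ℕ → ℕ → (H →L[ℂ] H),
    IsMatPoly P ∧ MlBoundedBy (fun k j => A k j - P k j) ε


section Aux

variable {H : Type*} [NormedAddCommGroup H] [InnerProductSpace ℂ H]
  [CompleteSpace H] [TopologicalSpace.SeparableSpace H]

lemma schurBoundedBy_mono {A : ℕ → ℕ → (H →L[ℂ] H)} {C C' : ℝ} (h : C ≤ C')
    (hA : SchurBoundedBy A C) : SchurBoundedBy A C' := by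
  intro F G x y
  refine (hA F G x y).trans ?_
  exact mul_le_mul_of_nonneg_right (mul_le_mul_of_nonneg_right h (Real.sqrt_nonneg _))
    (Real.sqrt_nonneg _)

lemma mrBoundedBy_mono {A : ℕ → ℕ → (H →L[ℂ] H)} {C C' : ℝ} (h : C ≤ C')
    (hA : MrBoundedBy A C) : MrBoundedBy A C' := by
  intro B D hD hB
  exact schurBoundedBy_mono (mul_le_mul_of_nonneg_right h hD) (hA B D hD hB)

lemma schur_assoc (X B A : ℕ → ℕ → (H →L[ℂ] H)) :
    schur X (schur B A) = schur (schur X B) A := rfl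

lemma mrBoundedBy_schur {A B : ℕ → ℕ → (H →L[ℂ] H)} {Ca Cb : ℝ} (hCb0 : 0 ≤ Cb)
    (hA : MrBoundedBy A Ca) (hB : MrBoundedBy B Cb) :
    MrBoundedBy (schur B A) (Ca * Cb) := by
  intro X D hD hX
  have h2 := hA (schur X B) (Cb * D) (mul_nonneg hCb0 hD) (hB X D hD hX)
  rw [← schur_assoc] at h2
  exact schurBoundedBy_mono (le_of_eq (mul_assoc Ca Cb D).symm) h2

lemma norm_entry_le {B : ℕ → ℕ → (H →L[ℂ] H)} {C : ℝ} (hC : 0 ≤ C)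
    (hB : MrBoundedBy B C) (k0 j0 : ℕ) : ‖B k0 j0‖ ≤ C := by
  set X : ℕ → ℕ → (H →L[ℂ] H) :=
    fun k j => if k = k0 ∧ j = j0 then ContinuousLinearMap.id ℂ H else 0 with hXdef
  have hX : SchurBoundedBy X 1 := by
    intro F G x y
    have hent : ∀ k ∈ G, ∀ j ∈ F, (inner ℂ (X k j (x j)) (y k) : ℂ) =
        if k = k0 then (if j = j0 then (inner ℂ (x j0) (y k0) : ℂ) else 0) else 0 := by
      intro k _ j _
      by_cases h1 : k = k0 ∧ j = j0
      · obtain ⟨rfl, rfl⟩ := h1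
        simp [hXdef]
      · rw [show (X k j) = 0 by simp [hXdef, h1]]
        by_cases h2 : k = k0
        · subst h2
          have h3 : ¬ j = j0 := fun hj => h1 ⟨rfl, hj⟩
          simp [h3]
        · simp [h2]
    have hsum : ∑ k ∈ G, ∑ j ∈ F, (inner ℂ (X k j (x j)) (y k) : ℂ) =
        if k0 ∈ G then (if j0 ∈ F then (inner ℂ (x j0) (y k0) : ℂ) else 0) else 0 := by
      rw [Finset.sum_congr rfl (fun k hk => Finset.sum_congr rfl (hent k hk))]
      simp [Finset.sum_ite_eq']
    rw [hsum]
    by_cases hG : k0 ∈ G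
    · by_cases hF : j0 ∈ F
      · simp only [hG, hF, if_true]
        have hx : ‖x j0‖ ≤ Real.sqrt (∑ j ∈ F, ‖x j‖ ^ 2) := by
          rw [show ‖x j0‖ = Real.sqrt (‖x j0‖ ^ 2) from (Real.sqrt_sq (norm_nonneg _)).symm]
          exact Real.sqrt_le_sqrt (Finset.single_le_sum
            (fun i _ => sq_nonneg ‖x i‖) hF)
        have hy : ‖y k0‖ ≤ Real.sqrt (∑ k ∈ G, ‖y k‖ ^ 2) := by
          rw [show ‖y k0‖ = Real.sqrt (‖y k0‖ ^ 2) from (Real.sqrt_sq (norm_nonneg _)).symm]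
          exact Real.sqrt_le_sqrt (Finset.single_le_sum
            (fun i _ => sq_nonneg ‖y i‖) hG)
        calc ‖(inner ℂ (x j0) (y k0) : ℂ)‖ ≤ ‖x j0‖ * ‖y k0‖ := norm_inner_le_norm _ _
          _ ≤ Real.sqrt (∑ j ∈ F, ‖x j‖ ^ 2) * Real.sqrt (∑ k ∈ G, ‖y k‖ ^ 2) :=
            mul_le_mul hx hy (norm_nonneg _) (Real.sqrt_nonneg _)
          _ = 1 * Real.sqrt (∑ j ∈ F, ‖x j‖ ^ 2) * Real.sqrt (∑ k ∈ G, ‖y k‖ ^ 2) := by ring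
      · simp only [hG, hF, if_true, if_false, norm_zero]
        positivity
    · simp only [hG, if_false, norm_zero]
      positivity
  have h2 := hB X 1 zero_le_one hX
  refine ContinuousLinearMap.opNorm_le_bound _ hC ?_
  intro v
  have h3 := h2 {j0} {k0} (fun _ => v) (fun _ => B k0 j0 v)
  simp only [Finset.sum_singleton] at h3
  have hent : (schur X B) k0 j0 = B k0 j0 := by
    ext u; simp [schur, hXdef]
  rw [hent] at h3
  rw [inner_self_eq_norm_sq_to_K] at h3
  have hsq : ∀ u : H, Real.sqrt (‖u‖ ^ 2) = ‖u‖ := fun u => Real.sqrt_sq (norm_nonneg u)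
  rw [hsq, hsq] at h3
  have h4 : ‖B k0 j0 v‖ ^ 2 ≤ C * ‖v‖ * ‖B k0 j0 v‖ := by
    calc ‖B k0 j0 v‖ ^ 2 = ‖((‖B k0 j0 v‖ : ℂ)) ^ 2‖ := by
          rw [norm_pow, Complex.norm_real, Real.norm_of_nonneg (norm_nonneg _)]
      _ ≤ C * 1 * ‖v‖ * ‖B k0 j0 v‖ := h3
      _ = C * ‖v‖ * ‖B k0 j0 v‖ := by ring
  by_cases h0 : ‖B k0 j0 v‖ = 0
  · rw [h0]; positivity
  · have hpos : 0 < ‖B k0 j0 v‖ := lt_of_le_of_ne (norm_nonneg _) (Ne.symm h0)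
    nlinarith [h4]

end Aux

/-- `L¹_r(ℓ²(H))` is a right ideal for the Schur product in `M_r(ℓ²(H))`: if
`A ∈ L¹_r(ℓ²(H))` and `B ∈ M_r(ℓ²(H))`, then `B*A ∈ L¹_r(ℓ²(H))`. -/
theorem memL1r_schur_right_ideal (A B : ℕ → ℕ → (H →L[ℂ] H))
    (hA : MemL1r A) (hB : MemMr B) : MemL1r (schur B A) := by
  obtain ⟨⟨Ca, hCa0, hCa⟩, happrox⟩ := hA
  obtain ⟨Cb, hCb0, hCb⟩ := hB
  constructor
  · exact ⟨Ca * Cb, mul_nonneg hCa0 hCb0, mrBoundedBy_schur hCb0 hCa hCb⟩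
  · intro ε hε
    have hδ : 0 < ε / (Cb + 1) := div_pos hε (by linarith)
    obtain ⟨P, hPpoly, hAP⟩ := happrox (ε / (Cb + 1)) hδ
    refine ⟨schur B P, ?_, ?_⟩
    · obtain ⟨⟨N, hN⟩, ⟨M, hM⟩⟩ := hPpoly
      refine ⟨⟨N, fun k j h => ?_⟩, ⟨Cb * M, fun k j => ?_⟩⟩
      · simp [schur, hN k j h]
      · calc ‖(B k j).comp (P k j)‖ ≤ ‖B k j‖ * ‖P k j‖ :=
              ContinuousLinearMap.opNorm_comp_le _ _
          _ ≤ Cb * M := mul_le_mul (norm_entry_le hCb0 hCb k j) (hM k j)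
              (norm_nonneg _) hCb0
    · have heq : (fun k j => schur B A k j - schur B P k j) =
          schur B (fun k j => A k j - P k j) := by
        funext k j
        ext u
        simp [schur]
      rw [heq]
      have h1 := mrBoundedBy_schur hCb0 hAP hCb
      refine mrBoundedBy_mono ?_ h1
      rw [div_mul_eq_mul_div, div_le_iff₀ (by linarith : (0:ℝ) < Cb + 1)]
      nlinarith
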